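/- The double integral over (0,1]² of (min(1/2, 1−a) + min(1/2, 1−b))·min((1−a)/b, (1−b)/a) da db equals (19/6)log 2 − 11/12. -/

import Mathlib

open Real MeasureTheory Set intervalIntegral

set_option maxHeartbeats 2000000

noncomputable def JA (a : ℝ) : ℝ :=
  1/2 + 5*a/4 - 2/3*a^2 + 1/2*(1-a)*Real.log 2 - (1-a)*Real.log a
    + 3/2*((1-a)*Real.log (1-a))

noncomputable def JB (a : ℝ) : ℝ :=
  19/(12*a) - 5/2 + a/4 + 2/3*a^2 + 1/2*(1-a)*Real.log 2 + (1-a)*(2-a)*Real.log a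
    - (3/2-a)*((1-a)*Real.log (1-a))

noncomputable def FA (x : ℝ) : ℝ :=
  3/8 + (3/4 + Real.log 2/2)*x + (3/4 - Real.log 2/4)*x^2 + (-(2/9))*x^3
    + (x/2 - 1)*(x*Real.log x) + (-(3/4)*(1-x))*((1-x)*Real.log (1-x))

noncomputable def FB (x : ℝ) : ℝ :=
  -17/72 + (-(47/12) + Real.log 2/2)*x + (5/12 - Real.log 2/4)*x^2 + (2/9)*x^3
    + (19/12 + 2*x + (-(3/2))*x^2 + (1/3)*x^3)*Real.log x
    + ((1-x)^2/3 + (1-x)/4)*((1-x)*Real.log (1-x))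

lemma hasDerivAt_cubic (c0 c1 c2 c3 x : ℝ) :
    HasDerivAt (fun y : ℝ => c0 + c1*y + c2*y^2 + c3*y^3) (c1 + 2*c2*x + 3*c3*x^2) x := by
  have h := (((hasDerivAt_const x c0).add ((hasDerivAt_id x).const_mul c1)).add
      ((hasDerivAt_pow 2 x).const_mul c2)).add ((hasDerivAt_pow 3 x).const_mul c3)
  refine h.congr_deriv ?_
  push_cast
  ring

lemma hasDerivAt_clog (c x : ℝ) (hx : x ≠ 0) :
    HasDerivAt (fun y : ℝ => c * Real.log y) (c / x) x := by
  have h := (Real.hasDerivAt_log hx).const_mul c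
  simpa [div_eq_mul_inv] using h

lemma hasDerivAt_one_sub_mul_log {x : ℝ} (hx : x ≠ 1) :
    HasDerivAt (fun y : ℝ => (1-y) * Real.log (1-y)) (-(Real.log (1-x) + 1)) x := by
  have h1 : HasDerivAt (fun y : ℝ => 1 - y) (-1) x := (hasDerivAt_id x).const_sub 1
  have h2 : (1 : ℝ) - x ≠ 0 := sub_ne_zero.2 (fun h => hx h.symm)
  have h := (Real.hasDerivAt_mul_log h2).comp x h1
  refine h.congr_deriv ?_
  ring

lemma min_eq_L {a b : ℝ} (ha : 0 < a) (hb : 0 < b) (h : a*(1-a) ≤ b*(1-b)) :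
    min ((1-a)/b) ((1-b)/a) = (1-a)/b := by
  apply min_eq_left
  rw [div_le_div_iff₀ hb ha]
  nlinarith

lemma min_eq_R {a b : ℝ} (ha : 0 < a) (hb : 0 < b) (h : b*(1-b) ≤ a*(1-a)) :
    min ((1-a)/b) ((1-b)/a) = (1-b)/a := by
  apply min_eq_right
  rw [div_le_div_iff₀ ha hb]
  nlinarith

lemma contOn_f (a : ℝ) (ha : 0 < a) {s : Set ℝ} (hs : ∀ x ∈ s, 0 < x) :
    ContinuousOn (fun b => (min (1/2:ℝ) (1 - a) + min (1/2) (1 - b)) *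
      min ((1 - a) / b) ((1 - b) / a)) s := by
  apply ContinuousOn.mul
  · exact continuousOn_const.add
      (continuousOn_const.inf (continuousOn_const.sub continuousOn_id))
  · exact ContinuousOn.inf
      (continuousOn_const.div continuousOn_id (fun x hx => (hs x hx).ne'))
      ((continuousOn_const.sub continuousOn_id).div_const a)

lemma innerA {a : ℝ} (h0 : 0 < a) (h2 : a ≤ 1/2) :
    ∫ b in Set.Ioc (0:ℝ) 1,
        (min (1/2) (1 - a) + min (1/2) (1 - b)) * min ((1 - a) / b) ((1 - b) / a)
      = JA a := by
  set f : ℝ → ℝ := fun b =>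
    (min (1/2) (1 - a) + min (1/2) (1 - b)) * min ((1 - a) / b) ((1 - b) / a) with hf
  have hwa : min (1/2 : ℝ) (1 - a) = 1/2 := min_eq_left (by linarith)
  have ha2 : (0:ℝ) < 1 - a := by linarith
  have eq1 : Set.EqOn f (fun b => (1-b)/a) (Set.Ioc (0:ℝ) a) := by
    intro b hb
    have hw : min (1/2 : ℝ) (1 - b) = 1/2 := min_eq_left (by linarith [hb.2])
    have k1 : (0:ℝ) ≤ a - b := by linarith [hb.2]
    have k2 : (0:ℝ) ≤ 1 - a - b := by linarith [hb.2]
    have hm := min_eq_R h0 hb.1 (by nlinarith [mul_nonneg k1 k2])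
    show (min (1/2:ℝ) (1 - a) + min (1/2) (1 - b)) * min ((1 - a) / b) ((1 - b) / a) = (1-b)/a
    rw [hwa, hw, hm]; ring
  have eq2 : Set.EqOn f (fun b => (1-a)/b) (Set.Ioc a (1/2:ℝ)) := by
    intro b hb
    have hw : min (1/2 : ℝ) (1 - b) = 1/2 := min_eq_left (by linarith [hb.2])
    have k1 : (0:ℝ) ≤ b - a := by linarith [hb.1]
    have k2 : (0:ℝ) ≤ 1 - a - b := by linarith [hb.2]
    have hm := min_eq_L h0 (h0.trans hb.1) (by nlinarith [mul_nonneg k1 k2])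
    show (min (1/2:ℝ) (1 - a) + min (1/2) (1 - b)) * min ((1 - a) / b) ((1 - b) / a) = (1-a)/b
    rw [hwa, hw, hm]; ring
  have eq3 : Set.EqOn f (fun b => (3/2-b)*((1-a)/b)) (Set.Ioc (1/2:ℝ) (1-a)) := by
    intro b hb
    have hw : min (1/2 : ℝ) (1 - b) = 1 - b := min_eq_right (by linarith [hb.1])
    have hb0 : (0:ℝ) < b := by linarith [hb.1]
    have k1 : (0:ℝ) ≤ b - a := by linarith [hb.1]
    have k2 : (0:ℝ) ≤ 1 - a - b := by linarith [hb.2]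
    have hm := min_eq_L h0 hb0 (by nlinarith [mul_nonneg k1 k2])
    show (min (1/2:ℝ) (1 - a) + min (1/2) (1 - b)) * min ((1 - a) / b) ((1 - b) / a) = (3/2-b)*((1-a)/b)
    rw [hwa, hw, hm]; ring
  have eq4 : Set.EqOn f (fun b => (3/2-b)*((1-b)/a)) (Set.Ioc (1-a) (1:ℝ)) := by
    intro b hb
    have hw : min (1/2 : ℝ) (1 - b) = 1 - b := min_eq_right (by linarith [hb.1])
    have hb0 : (0:ℝ) < b := by linarith [hb.1]
    have k1 : (0:ℝ) ≤ b - a := by linarith [hb.1]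
    have k2 : (0:ℝ) ≤ a + b - 1 := by linarith [hb.1]
    have hm := min_eq_R h0 hb0 (by nlinarith [mul_nonneg k1 k2])
    show (min (1/2:ℝ) (1 - a) + min (1/2) (1 - b)) * min ((1 - a) / b) ((1 - b) / a) = (3/2-b)*((1-b)/a)
    rw [hwa, hw, hm]; ring
  have i1 : IntervalIntegrable f volume 0 a := by
    rw [intervalIntegrable_iff, Set.uIoc_of_le h0.le]
    exact (((continuous_const.sub continuous_id).div_const a).integrableOn_Ioc).congr_fun
      (fun b hb => (eq1 hb).symm) measurableSet_Ioc
  have i2 : IntervalIntegrable f volume a (1/2) := by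
    rw [intervalIntegrable_iff, Set.uIoc_of_le h2]
    exact ((contOn_f a h0 (s := Set.Icc a (1/2))
      (fun x hx => h0.trans_le hx.1)).integrableOn_Icc).mono_set Set.Ioc_subset_Icc_self
  have i3 : IntervalIntegrable f volume (1/2) (1-a) := by
    rw [intervalIntegrable_iff, Set.uIoc_of_le (by linarith)]
    exact ((contOn_f a h0 (s := Set.Icc (1/2) (1-a))
      (fun x hx => by linarith [hx.1])).integrableOn_Icc).mono_set Set.Ioc_subset_Icc_self
  have i4 : IntervalIntegrable f volume (1-a) 1 := by
    rw [intervalIntegrable_iff, Set.uIoc_of_le (by linarith)]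
    exact ((contOn_f a h0 (s := Set.Icc (1-a) 1)
      (fun x hx => by linarith [hx.1])).integrableOn_Icc).mono_set Set.Ioc_subset_Icc_self
  have v1 : ∫ b in (0:ℝ)..a, f b = 1 - a/2 := by
    rw [integral_of_le h0.le, MeasureTheory.setIntegral_congr_fun measurableSet_Ioc eq1,
      ← integral_of_le h0.le,
      integral_eq_sub_of_hasDerivAt
        (f := fun y : ℝ => (0:ℝ) + (1/a)*y + (-(1/(2*a)))*y^2 + 0*y^3)
        (f' := fun y : ℝ => (1-y)/a)
        (fun x _ => by
          refine (hasDerivAt_cubic 0 (1/a) (-(1/(2*a))) 0 x).congr_deriv ?_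
          field_simp; ring)
        (((continuous_const.sub continuous_id).div_const a).intervalIntegrable _ _)]
    field_simp; ring
  have v2 : ∫ b in a..(1/2:ℝ), f b = (1-a)*Real.log (1/2) - (1-a)*Real.log a := by
    rw [integral_of_le h2, MeasureTheory.setIntegral_congr_fun measurableSet_Ioc eq2,
      ← integral_of_le h2,
      integral_eq_sub_of_hasDerivAt
        (f := fun y : ℝ => (1-a)*Real.log y)
        (f' := fun y : ℝ => (1-a)/y)
        (fun x hx => by
          rw [Set.uIcc_of_le h2] at hx
          exact hasDerivAt_clog (1-a) x (h0.trans_le hx.1).ne')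
        (ContinuousOn.intervalIntegrable (by
          rw [Set.uIcc_of_le h2]
          exact continuousOn_const.div continuousOn_id
            (fun x hx => (h0.trans_le hx.1).ne')))]
  have v3 : ∫ b in (1/2:ℝ)..(1-a), f b
      = (1-a)*((3/2)*Real.log (1-a) - (1-a)) - (1-a)*((3/2)*Real.log (1/2) - 1/2) := by
    rw [integral_of_le (by linarith), MeasureTheory.setIntegral_congr_fun measurableSet_Ioc eq3,
      ← integral_of_le (by linarith),
      integral_eq_sub_of_hasDerivAt
        (f := fun y : ℝ => (1-a)*((3/2)*Real.log y - y))
        (f' := fun y : ℝ => (3/2-y)*((1-a)/y))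
        (fun x hx => by
          rw [Set.uIcc_of_le (by linarith)] at hx
          have hx0 : (0:ℝ) < x := by linarith [hx.1]
          have h := ((hasDerivAt_clog (3/2) x hx0.ne').sub (hasDerivAt_id x)).const_mul (1-a)
          refine h.congr_deriv ?_
          field_simp)
        (ContinuousOn.intervalIntegrable (by
          rw [Set.uIcc_of_le (by linarith)]
          exact (continuousOn_const.sub continuousOn_id).mul
            (continuousOn_const.div continuousOn_id
              (fun x hx => ne_of_gt (show (0:ℝ) < x by linarith [hx.1])))))]
  have v4 : ∫ b in (1-a)..(1:ℝ), f b = a/4 + a^2/3 := by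
    rw [integral_of_le (by linarith), MeasureTheory.setIntegral_congr_fun measurableSet_Ioc eq4,
      ← integral_of_le (by linarith),
      integral_eq_sub_of_hasDerivAt
        (f := fun y : ℝ => (0:ℝ) + (3/(2*a))*y + (-(5/(4*a)))*y^2 + (1/(3*a))*y^3)
        (f' := fun y : ℝ => (3/2-y)*((1-y)/a))
        (fun x _ => by
          refine (hasDerivAt_cubic 0 (3/(2*a)) (-(5/(4*a))) (1/(3*a)) x).congr_deriv ?_
          field_simp; ring)
        (((continuous_const.sub continuous_id).mul
            ((continuous_const.sub continuous_id).div_const a)).intervalIntegrable _ _)]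
    field_simp; ring
  rw [← intervalIntegral.integral_of_le (by norm_num : (0:ℝ) ≤ 1),
    ← intervalIntegral.integral_add_adjacent_intervals (i1.trans (i2.trans i3)) i4,
    ← intervalIntegral.integral_add_adjacent_intervals (i1.trans i2) i3,
    ← intervalIntegral.integral_add_adjacent_intervals i1 i2,
    v1, v2, v3, v4]
  rw [show Real.log (1/2:ℝ) = -Real.log 2 by rw [one_div, Real.log_inv]]
  simp only [JA]
  ring

lemma innerB {a : ℝ} (h1 : 1/2 ≤ a) (ha1 : a ≤ 1) :
    ∫ b in Set.Ioc (0:ℝ) 1,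
        (min (1/2) (1 - a) + min (1/2) (1 - b)) * min ((1 - a) / b) ((1 - b) / a)
      = JB a := by
  rcases eq_or_lt_of_le ha1 with rfl | ha1
  · have hz : Set.EqOn (fun b : ℝ =>
        (min (1/2) (1 - 1) + min (1/2) (1 - b)) * min ((1 - 1) / b) ((1 - b) / 1))
        (fun _ => (0:ℝ)) (Set.Ioc (0:ℝ) 1) := by
      intro b hb
      have : min ((1 - 1) / b) ((1 - b) / 1) = 0 := by
        rw [sub_self, zero_div]
        exact min_eq_left (by simp; linarith [hb.2])
      simp only [this, mul_zero]
    rw [MeasureTheory.setIntegral_congr_fun measurableSet_Ioc hz]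
    simp only [JB]
    norm_num
  have h0 : (0:ℝ) < a := by linarith
  have ht0 : (0:ℝ) < 1 - a := by linarith
  have ht2 : 1 - a ≤ 1/2 := by linarith
  set f : ℝ → ℝ := fun b =>
    (min (1/2) (1 - a) + min (1/2) (1 - b)) * min ((1 - a) / b) ((1 - b) / a) with hf
  have hwa : min (1/2 : ℝ) (1 - a) = 1 - a := min_eq_right (by linarith)
  have eq1 : Set.EqOn f (fun b => (3/2-a)*((1-b)/a)) (Set.Ioc (0:ℝ) (1-a)) := by
    intro b hb
    have hw : min (1/2 : ℝ) (1 - b) = 1/2 := min_eq_left (by linarith [hb.2])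
    have k1 : (0:ℝ) ≤ a - b := by linarith [hb.2]
    have k2 : (0:ℝ) ≤ 1 - a - b := by linarith [hb.2]
    have hm := min_eq_R h0 hb.1 (by nlinarith [mul_nonneg k1 k2])
    show (min (1/2:ℝ) (1 - a) + min (1/2) (1 - b)) * min ((1 - a) / b) ((1 - b) / a) = (3/2-a)*((1-b)/a)
    rw [hwa, hw, hm]; ring
  have eq2 : Set.EqOn f (fun b => (3/2-a)*(1-a)*(1/b)) (Set.Ioc (1-a) (1/2:ℝ)) := by
    intro b hb
    have hw : min (1/2 : ℝ) (1 - b) = 1/2 := min_eq_left (by linarith [hb.2])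
    have k1 : (0:ℝ) ≤ a - b := by linarith [hb.2]
    have k2 : (0:ℝ) ≤ a + b - 1 := by linarith [hb.1]
    have hm := min_eq_L h0 (ht0.trans hb.1) (by nlinarith [mul_nonneg k1 k2])
    show (min (1/2:ℝ) (1 - a) + min (1/2) (1 - b)) * min ((1 - a) / b) ((1 - b) / a) = (3/2-a)*(1-a)*(1/b)
    rw [hwa, hw, hm]
    field_simp
    ring
  have eq3 : Set.EqOn f (fun b => (2-a-b)*((1-a)/b)) (Set.Ioc (1/2:ℝ) a) := by
    intro b hb
    have hw : min (1/2 : ℝ) (1 - b) = 1 - b := min_eq_right (by linarith [hb.1])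
    have hb0 : (0:ℝ) < b := by linarith [hb.1]
    have k1 : (0:ℝ) ≤ a - b := by linarith [hb.2]
    have k2 : (0:ℝ) ≤ a + b - 1 := by linarith [hb.1]
    have hm := min_eq_L h0 hb0 (by nlinarith [mul_nonneg k1 k2])
    show (min (1/2:ℝ) (1 - a) + min (1/2) (1 - b)) * min ((1 - a) / b) ((1 - b) / a) = (2-a-b)*((1-a)/b)
    rw [hwa, hw, hm]; ring
  have eq4 : Set.EqOn f (fun b => (2-a-b)*((1-b)/a)) (Set.Ioc a (1:ℝ)) := by
    intro b hb
    have hw : min (1/2 : ℝ) (1 - b) = 1 - b := min_eq_right (by linarith [hb.1])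
    have k1 : (0:ℝ) ≤ b - a := by linarith [hb.1]
    have k2 : (0:ℝ) ≤ a + b - 1 := by linarith [hb.1]
    have hm := min_eq_R h0 (h0.trans hb.1) (by nlinarith [mul_nonneg k1 k2])
    show (min (1/2:ℝ) (1 - a) + min (1/2) (1 - b)) * min ((1 - a) / b) ((1 - b) / a) = (2-a-b)*((1-b)/a)
    rw [hwa, hw, hm]; ring
  have i1 : IntervalIntegrable f volume 0 (1-a) := by
    rw [intervalIntegrable_iff, Set.uIoc_of_le ht0.le]
    exact ((continuous_const.mul
      ((continuous_const.sub continuous_id).div_const a)).integrableOn_Ioc).congr_fun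
      (fun b hb => (eq1 hb).symm) measurableSet_Ioc
  have i2 : IntervalIntegrable f volume (1-a) (1/2) := by
    rw [intervalIntegrable_iff, Set.uIoc_of_le ht2]
    exact ((contOn_f a h0 (s := Set.Icc (1-a) (1/2))
      (fun x hx => ht0.trans_le hx.1)).integrableOn_Icc).mono_set Set.Ioc_subset_Icc_self
  have i3 : IntervalIntegrable f volume (1/2) a := by
    rw [intervalIntegrable_iff, Set.uIoc_of_le h1]
    exact ((contOn_f a h0 (s := Set.Icc (1/2) a)
      (fun x hx => by linarith [hx.1])).integrableOn_Icc).mono_set Set.Ioc_subset_Icc_self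
  have i4 : IntervalIntegrable f volume a 1 := by
    rw [intervalIntegrable_iff, Set.uIoc_of_le ha1.le]
    exact ((contOn_f a h0 (s := Set.Icc a 1)
      (fun x hx => h0.trans_le hx.1)).integrableOn_Icc).mono_set Set.Ioc_subset_Icc_self
  have v1 : ∫ b in (0:ℝ)..(1-a), f b = (3/2-a)*((1-a) - (1-a)^2/2)/a := by
    rw [integral_of_le ht0.le, MeasureTheory.setIntegral_congr_fun measurableSet_Ioc eq1,
      ← integral_of_le ht0.le,
      integral_eq_sub_of_hasDerivAt
        (f := fun y : ℝ => (0:ℝ) + ((3/2-a)/a)*y + (-((3/2-a)/(2*a)))*y^2 + 0*y^3)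
        (f' := fun y : ℝ => (3/2-a)*((1-y)/a))
        (fun x _ => by
          refine (hasDerivAt_cubic 0 ((3/2-a)/a) (-((3/2-a)/(2*a))) 0 x).congr_deriv ?_
          field_simp; ring)
        ((continuous_const.mul
          ((continuous_const.sub continuous_id).div_const a)).intervalIntegrable _ _)]
    field_simp; ring
  have v2 : ∫ b in (1-a)..(1/2:ℝ), f b
      = (3/2-a)*(1-a)*Real.log (1/2) - (3/2-a)*(1-a)*Real.log (1-a) := by
    rw [integral_of_le ht2, MeasureTheory.setIntegral_congr_fun measurableSet_Ioc eq2,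
      ← integral_of_le ht2,
      integral_eq_sub_of_hasDerivAt
        (f := fun y : ℝ => (3/2-a)*(1-a)*Real.log y)
        (f' := fun y : ℝ => (3/2-a)*(1-a)*(1/y))
        (fun x hx => by
          rw [Set.uIcc_of_le ht2] at hx
          have h := hasDerivAt_clog ((3/2-a)*(1-a)) x (ht0.trans_le hx.1).ne'
          refine h.congr_deriv ?_
          ring)
        (ContinuousOn.intervalIntegrable (by
          rw [Set.uIcc_of_le ht2]
          exact (continuousOn_const.mul (continuousOn_const.div continuousOn_id
            (fun x hx => (ht0.trans_le hx.1).ne')))))]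
  have v3 : ∫ b in (1/2:ℝ)..a, f b
      = (1-a)*((2-a)*Real.log a - a) - (1-a)*((2-a)*Real.log (1/2) - 1/2) := by
    rw [integral_of_le h1, MeasureTheory.setIntegral_congr_fun measurableSet_Ioc eq3,
      ← integral_of_le h1,
      integral_eq_sub_of_hasDerivAt
        (f := fun y : ℝ => (1-a)*((2-a)*Real.log y - y))
        (f' := fun y : ℝ => (2-a-y)*((1-a)/y))
        (fun x hx => by
          rw [Set.uIcc_of_le h1] at hx
          have hx0 : (0:ℝ) < x := by linarith [hx.1]
          have h := ((hasDerivAt_clog (2-a) x hx0.ne').sub (hasDerivAt_id x)).const_mul (1-a)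
          refine h.congr_deriv ?_
          field_simp)
        (ContinuousOn.intervalIntegrable (by
          rw [Set.uIcc_of_le h1]
          exact (continuousOn_const.sub continuousOn_id).mul
            (continuousOn_const.div continuousOn_id
              (fun x hx => ne_of_gt (show (0:ℝ) < x by linarith [hx.1])))))]
  have v4 : ∫ b in a..(1:ℝ), f b
      = ((2-a)*1 - (3-a)*1^2/2 + 1^3/3)/a - ((2-a)*a - (3-a)*a^2/2 + a^3/3)/a := by
    rw [integral_of_le ha1.le, MeasureTheory.setIntegral_congr_fun measurableSet_Ioc eq4,
      ← integral_of_le ha1.le,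
      integral_eq_sub_of_hasDerivAt
        (f := fun y : ℝ => (0:ℝ) + ((2-a)/a)*y + (-((3-a)/(2*a)))*y^2 + (1/(3*a))*y^3)
        (f' := fun y : ℝ => (2-a-y)*((1-y)/a))
        (fun x _ => by
          refine (hasDerivAt_cubic 0 ((2-a)/a) (-((3-a)/(2*a))) (1/(3*a)) x).congr_deriv ?_
          field_simp; ring)
        (((continuous_const.sub continuous_id).mul
            ((continuous_const.sub continuous_id).div_const a)).intervalIntegrable _ _)]
    field_simp; ring
  rw [← intervalIntegral.integral_of_le (by norm_num : (0:ℝ) ≤ 1),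
    ← intervalIntegral.integral_add_adjacent_intervals (i1.trans (i2.trans i3)) i4,
    ← intervalIntegral.integral_add_adjacent_intervals (i1.trans i2) i3,
    ← intervalIntegral.integral_add_adjacent_intervals i1 i2,
    v1, v2, v3, v4]
  rw [show Real.log (1/2:ℝ) = -Real.log 2 by rw [one_div, Real.log_inv]]
  simp only [JB]
  field_simp
  ring

lemma FA_deriv {x : ℝ} (h0 : 0 < x) (h1 : x < 1) : HasDerivAt FA (JA x) x := by
  have hM := Real.hasDerivAt_mul_log h0.ne'
  have hN := hasDerivAt_one_sub_mul_log h1.ne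
  have hc := hasDerivAt_cubic (3/8) (3/4 + Real.log 2/2) (3/4 - Real.log 2/4) (-(2/9)) x
  have hl1 : HasDerivAt (fun y : ℝ => y/2 - 1) (1/2) x := by
    simpa using ((hasDerivAt_id x).div_const 2).sub_const 1
  have hl2 : HasDerivAt (fun y : ℝ => -(3/4)*(1-y)) (3/4) x := by
    have h := ((hasDerivAt_id x).const_sub 1).const_mul (-(3/4) : ℝ)
    refine h.congr_deriv ?_
    ring
  have h : HasDerivAt FA
      ((3/4 + Real.log 2/2) + 2*(3/4 - Real.log 2/4)*x + 3*(-(2/9))*x^2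
        + ((1/2)*(x*Real.log x) + (x/2 - 1)*(Real.log x + 1))
        + ((3/4)*((1-x)*Real.log (1-x)) + (-(3/4)*(1-x))*(-(Real.log (1-x) + 1)))) x :=
    (hc.add (hl1.mul hM)).add (hl2.mul hN)
  convert h using 1
  simp only [JA]
  ring

lemma FB_deriv {x : ℝ} (h0 : 0 < x) (h1 : x < 1) : HasDerivAt FB (JB x) x := by
  have hN := hasDerivAt_one_sub_mul_log h1.ne
  have hL := Real.hasDerivAt_log h0.ne'
  have hc := hasDerivAt_cubic (-17/72) (-(47/12) + Real.log 2/2) (5/12 - Real.log 2/4) (2/9) x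
  have hp := hasDerivAt_cubic (19/12) 2 (-(3/2)) (1/3) x
  have hq : HasDerivAt (fun y : ℝ => (1-y)^2/3 + (1-y)/4)
      ((2*(1-x)*(-1))/3 + (-1)/4) x := by
    have h2 : HasDerivAt (fun y : ℝ => (1-y)^2) (2*(1-x)*(-1)) x := by
      have h3 := (((hasDerivAt_id x).const_sub 1).pow 2)
      refine h3.congr_deriv ?_
      simp only [id_eq]
      push_cast; ring
    exact (h2.div_const 3).add (((hasDerivAt_id x).const_sub 1).div_const 4)
  have h : HasDerivAt FB
      (((-(47/12) + Real.log 2/2) + 2*(5/12 - Real.log 2/4)*x + 3*(2/9)*x^2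
        + ((2 + 2*(-(3/2))*x + 3*(1/3)*x^2)*Real.log x
          + (19/12 + 2*x + (-(3/2))*x^2 + (1/3)*x^3)*x⁻¹))
        + (((2*(1-x)*(-1))/3 + (-1)/4)*((1-x)*Real.log (1-x))
          + ((1-x)^2/3 + (1-x)/4)*(-(Real.log (1-x) + 1)))) x :=
    (hc.add (hp.mul hL)).add (hq.mul hN)
  convert h using 1
  simp only [JB]
  field_simp
  ring

lemma FA_cont : Continuous FA := by
  unfold FA
  exact ((((continuous_const.add (continuous_const.mul continuous_id)).add
    (continuous_const.mul (continuous_pow 2))).add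
    (continuous_const.mul (continuous_pow 3))).add
    (((continuous_id.div_const 2).sub continuous_const).mul Real.continuous_mul_log)).add
    ((continuous_const.mul (continuous_const.sub continuous_id)).mul
      (Real.continuous_mul_log.comp (continuous_const.sub continuous_id)))

lemma FB_cont : ContinuousOn FB (Set.Icc (1/2:ℝ) 1) := by
  unfold FB
  have hne : ∀ x ∈ Set.Icc (1/2:ℝ) 1, x ≠ 0 := fun x hx => by
    have : (0:ℝ) < x := by linarith [hx.1]
    exact this.ne'
  refine ContinuousOn.add (ContinuousOn.add ?_ ?_) ?_
  · exact Continuous.continuousOn (by fun_prop)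
  · exact ContinuousOn.mul (Continuous.continuousOn (by fun_prop))
      (Real.continuousOn_log.mono (fun x hx => hne x hx))
  · exact Continuous.continuousOn ((by fun_prop : Continuous fun x : ℝ =>
      (1-x)^2/3 + (1-x)/4).mul
      (Real.continuous_mul_log.comp (continuous_const.sub continuous_id)))

lemma log_integrable : IntervalIntegrable Real.log volume 0 (1/2) := by
  have hmin : min (0:ℝ) (1/2) = 0 := by norm_num
  have hmax : max (0:ℝ) (1/2) = 1/2 := by norm_num
  have h := intervalIntegral.intervalIntegrable_deriv_of_nonneg (a := (0:ℝ)) (b := 1/2)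
    (g := fun x => x - x*Real.log x) (g' := fun x => -Real.log x)
    ((continuous_id.sub Real.continuous_mul_log).continuousOn)
    (fun x hx => by
      rw [hmin, hmax] at hx
      have h := (hasDerivAt_id x).sub (Real.hasDerivAt_mul_log hx.1.ne')
      refine h.congr_deriv ?_
      ring)
    (fun x hx => by
      rw [hmin, hmax] at hx
      have hl := Real.log_nonpos (le_of_lt hx.1) (by linarith [hx.2])
      show (0:ℝ) ≤ -Real.log x
      linarith)
  have h2 := h.neg
  have he : (-fun x : ℝ => -Real.log x) = Real.log := by
    funext x; simp
  rwa [he] at h2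

lemma JA_integrable : IntervalIntegrable JA volume 0 (1/2) := by
  have hP : IntervalIntegrable
      (fun x : ℝ => 1/2 + 5*x/4 - 2/3*x^2 + 1/2*(1-x)*Real.log 2) volume 0 (1/2) :=
    Continuous.intervalIntegrable (by fun_prop) _ _
  have hM : IntervalIntegrable (fun x : ℝ => x*Real.log x) volume 0 (1/2) :=
    Real.continuous_mul_log.intervalIntegrable _ _
  have hN : IntervalIntegrable (fun x : ℝ => 3/2*((1-x)*Real.log (1-x))) volume 0 (1/2) :=
    (continuous_const.mul
      (Real.continuous_mul_log.comp (continuous_const.sub continuous_id))).intervalIntegrable _ _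
  have h := ((hP.add hM).add hN).sub log_integrable
  rw [intervalIntegrable_iff] at h ⊢
  exact h.congr_fun (fun x hx => by simp only [JA]; ring) measurableSet_uIoc

lemma JB_integrable : IntervalIntegrable JB volume (1/2) 1 := by
  apply ContinuousOn.intervalIntegrable
  rw [Set.uIcc_of_le (by norm_num : (1/2:ℝ) ≤ 1)]
  have hne : ∀ x ∈ Set.Icc (1/2:ℝ) 1, x ≠ 0 := fun x hx =>
    ne_of_gt (show (0:ℝ) < x by linarith [hx.1])
  unfold JB
  refine ContinuousOn.sub (ContinuousOn.add (ContinuousOn.add (ContinuousOn.add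
    (ContinuousOn.add (ContinuousOn.sub ?_ ?_) ?_) ?_) ?_) ?_) ?_
  · exact continuousOn_const.div (by fun_prop) (fun x hx => by
      have hx0 : (0:ℝ) < x := by linarith [hx.1]
      positivity)
  · exact continuousOn_const
  · exact Continuous.continuousOn (by fun_prop)
  · exact Continuous.continuousOn (by fun_prop)
  · exact Continuous.continuousOn (by fun_prop)
  · exact ContinuousOn.mul (Continuous.continuousOn (by fun_prop))
      (Real.continuousOn_log.mono (fun x hx => hne x hx))
  · exact ContinuousOn.mul (Continuous.continuousOn (by fun_prop))
      (Continuous.continuousOn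
        (Real.continuous_mul_log.comp (continuous_const.sub continuous_id)))

theorem integral_B :
    ∫ a in Set.Ioc (0:ℝ) 1, ∫ b in Set.Ioc (0:ℝ) 1,
        (min (1/2) (1 - a) + min (1/2) (1 - b)) * min ((1 - a) / b) ((1 - b) / a)
      = (19/6) * Real.log 2 - 11/12 := by
  rw [← intervalIntegral.integral_of_le (by norm_num : (0:ℝ) ≤ 1)]
  have hae : ∀ᵐ x ∂(volume : Measure ℝ), x ∈ Set.uIoc (0:ℝ) 1 →
      (∫ b in Set.Ioc (0:ℝ) 1,
        (min (1/2) (1 - x) + min (1/2) (1 - b)) * min ((1 - x) / b) ((1 - b) / x))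
      = (if x ≤ 1/2 then JA x else JB x) := by
    apply MeasureTheory.ae_of_all
    intro x hx
    rw [Set.uIoc_of_le (by norm_num : (0:ℝ) ≤ 1)] at hx
    by_cases hx2 : x ≤ 1/2
    · rw [if_pos hx2]
      exact innerA hx.1 hx2
    · rw [if_neg hx2]
      exact innerB (le_of_lt (not_le.1 hx2)) hx.2
  rw [intervalIntegral.integral_congr_ae hae]
  have hGA : IntervalIntegrable (fun x => if x ≤ 1/2 then JA x else JB x) volume 0 (1/2) := by
    have h := JA_integrable
    rw [intervalIntegrable_iff] at h ⊢
    exact h.congr_fun (fun x hx => by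
      rw [Set.uIoc_of_le (by norm_num : (0:ℝ) ≤ 1/2)] at hx
      rw [if_pos hx.2]) measurableSet_uIoc
  have hGB : IntervalIntegrable (fun x => if x ≤ 1/2 then JA x else JB x) volume (1/2) 1 := by
    have h := JB_integrable
    rw [intervalIntegrable_iff] at h ⊢
    exact h.congr_fun (fun x hx => by
      rw [Set.uIoc_of_le (by norm_num : (1/2:ℝ) ≤ 1)] at hx
      rw [if_neg (not_le.2 hx.1)]) measurableSet_uIoc
  rw [← intervalIntegral.integral_add_adjacent_intervals hGA hGB]
  have e1 : (∫ x in (0:ℝ)..(1/2), (if x ≤ 1/2 then JA x else JB x))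
      = ∫ x in (0:ℝ)..(1/2), JA x := by
    apply intervalIntegral.integral_congr_ae
    apply MeasureTheory.ae_of_all
    intro x hx
    rw [Set.uIoc_of_le (by norm_num : (0:ℝ) ≤ 1/2)] at hx
    rw [if_pos hx.2]
  have e2 : (∫ x in (1/2:ℝ)..1, (if x ≤ 1/2 then JA x else JB x))
      = ∫ x in (1/2:ℝ)..1, JB x := by
    apply intervalIntegral.integral_congr_ae
    apply MeasureTheory.ae_of_all
    intro x hx
    rw [Set.uIoc_of_le (by norm_num : (1/2:ℝ) ≤ 1)] at hx
    rw [if_neg (not_le.2 hx.1)]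
  rw [e1, e2]
  rw [intervalIntegral.integral_eq_sub_of_hasDeriv_right_of_le (by norm_num : (0:ℝ) ≤ 1/2)
    (FA_cont.continuousOn)
    (fun x hx => (FA_deriv hx.1 (by linarith [hx.2])).hasDerivWithinAt)
    JA_integrable]
  rw [intervalIntegral.integral_eq_sub_of_hasDeriv_right_of_le (by norm_num : (1/2:ℝ) ≤ 1)
    FB_cont
    (fun x hx => (FB_deriv (by linarith [hx.1]) hx.2).hasDerivWithinAt)
    JB_integrable]
  have hlog2 : Real.log (1/2:ℝ) = -Real.log 2 := by rw [one_div, Real.log_inv]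
  simp only [FA, FB]
  norm_num [Real.log_one, hlog2]
  ring
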